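/- Let A be an ordinary ring and ρ a Sylvester rank function on A (defined on morphisms of finitely generated projective modules). Then for every bounded exact complex X of finitely generated projective A-modules with differentials d_n : X_n → X_{n−1}, one has ρ(X_n) = ρ(d_n) + ρ(d_{n+1}) for all n. -/

import Mathlib

open CategoryTheory CategoryTheory.Limits

/-- A finitely generated projective module, i.e. an object of proj(A). -/
def IsFGProj (A : Type) [Ring A] (P : ModuleCat.{0} A) : Prop :=
  Module.Finite A P ∧ Module.Projective A P

/-- for a Sylvester morphism rank function ρ on a ring A and a bounded
exact complex X of finitely generated projective A-modules with differentials
d n : X (n+1) ⟶ X n, one has ρ(X_m) = ρ(d_m) + ρ(d_{m+1}) for all m (stated at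
m = n+1: ρ(id (X (n+1))) = ρ(d n) + ρ(d (n+1))). -/
theorem sylvester_rank_of_exact_complex (A : Type) [Ring A]
    (ρ : ∀ ⦃P Q : ModuleCat.{0} A⦄, (P ⟶ Q) → ℝ)
    (hnonneg : ∀ ⦃P Q : ModuleCat.{0} A⦄ (f : P ⟶ Q),
      IsFGProj A P → IsFGProj A Q → 0 ≤ ρ f)
    (hnorm : ρ (𝟙 (ModuleCat.of A A)) = 1)
    (hadd : ∀ ⦃P Q P' Q' : ModuleCat.{0} A⦄ (f : P ⟶ Q) (g : P' ⟶ Q'),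
      IsFGProj A P → IsFGProj A Q → IsFGProj A P' → IsFGProj A Q' →
      ρ (biprod.map f g) = ρ f + ρ g)
    (htriangular : ∀ ⦃P Q P' Q' : ModuleCat.{0} A⦄ (f : P ⟶ Q) (g : P' ⟶ Q')
      (h : P' ⟶ Q), IsFGProj A P → IsFGProj A Q → IsFGProj A P' → IsFGProj A Q' →
      ρ f + ρ g ≤ ρ (biprod.map f g + biprod.snd ≫ h ≫ biprod.inl))
    (hideal : ∀ ⦃P Q R : ModuleCat.{0} A⦄ (f : P ⟶ Q) (g : Q ⟶ R),
      IsFGProj A P → IsFGProj A Q → IsFGProj A R →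
      ρ (f ≫ g) ≤ ρ f ∧ ρ (f ≫ g) ≤ ρ g)
    (X : ℤ → ModuleCat.{0} A) (d : ∀ n : ℤ, X (n + 1) ⟶ X n)
    (hfgp : ∀ n : ℤ, IsFGProj A (X n))
    (hexact : ∀ n : ℤ, Function.Exact (d (n + 1)) (d n))
    (hbounded : ∃ N : ℕ, ∀ n : ℤ, (N : ℤ) < |n| → Subsingleton (X n)) :
    ∀ n : ℤ, ρ (𝟙 (X (n + 1))) = ρ (d n) + ρ (d (n + 1)) := by
  obtain ⟨N, hN⟩ := hbounded
  have hdd : ∀ (k : ℤ) (x : X (k + 1 + 1)), d k (d (k + 1) x) = 0 := fun k x =>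
    (hexact k).apply_apply_eq_zero x
  have hker : ∀ (k : ℤ) (x : X (k + 1)), d k x = 0 → x ∈ LinearMap.range (d (k + 1)).hom := by
    intro k x hx
    obtain ⟨y, hy⟩ := (hexact k x).mp hx
    exact ⟨y, hy⟩
  have hmem0 : ∀ (k : ℤ) (y : ↥(LinearMap.range (d (k + 1)).hom)), d k (y : X (k + 1)) = 0 := by
    intro k y
    obtain ⟨z, hz⟩ := y.2
    rw [← hz]
    exact hdd k z
  -- construction of a section of the range restriction and of the associated retraction
  have hπ : ∀ k : ℤ, Module.Projective A ↥(LinearMap.range (d k).hom) →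
      ∃ (s : ↥(LinearMap.range (d k).hom) →ₗ[A] X (k + 1))
        (π : X (k + 1) →ₗ[A] ↥(LinearMap.range (d (k + 1)).hom)),
        (∀ y, (d k).hom.rangeRestrict (s y) = y) ∧
        (∀ y : ↥(LinearMap.range (d (k + 1)).hom), π (y : X (k + 1)) = y) ∧
        (∀ x : X (k + 1), (π x : X (k + 1)) = x - s ((d k).hom.rangeRestrict x)) := by
    intro k hp
    haveI := hp
    obtain ⟨s, hs⟩ := Module.projective_lifting_property ((d k).hom.rangeRestrict) LinearMap.id
      (d k).hom.surjective_rangeRestrict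
    have hs' : ∀ y, (d k).hom.rangeRestrict (s y) = y := fun y => LinearMap.congr_fun hs y
    have hdks : ∀ y, d k (s y) = (y : X k) := fun y => congrArg Subtype.val (hs' y)
    have hsub : ∀ x : X (k + 1), x - s ((d k).hom.rangeRestrict x) ∈ LinearMap.range (d (k + 1)).hom := by
      intro x
      apply hker
      have h1 : d k (s ((d k).hom.rangeRestrict x)) = d k x := hdks _
      rw [map_sub, h1, sub_self]
    refine ⟨s, LinearMap.codRestrict _
      ((LinearMap.id : X (k + 1) →ₗ[A] X (k + 1)) - s ∘ₗ (d k).hom.rangeRestrict) hsub,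
      hs', ?_, fun x => rfl⟩
    intro y
    apply Subtype.ext
    have hc : (d k).hom.rangeRestrict (y : X (k + 1)) = 0 := by
      apply Subtype.ext
      exact hmem0 k y
    show (y : X (k + 1)) - s ((d k).hom.rangeRestrict (y : X (k + 1))) = (y : X (k + 1))
    rw [hc, map_zero, sub_zero]
  -- ranges are finitely generated projective
  have hFPbase : ∀ k : ℤ, (N : ℤ) < |k| →
      Module.Finite A ↥(LinearMap.range (d k).hom) ∧ Module.Projective A ↥(LinearMap.range (d k).hom) := by
    intro k hk
    haveI := hN k hk
    haveI : Subsingleton ↥(LinearMap.range (d k).hom) :=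
      ⟨fun a b => Subtype.ext (Subsingleton.elim _ _)⟩
    refine ⟨?_, inferInstance⟩
    haveI := (hfgp (k + 1)).1
    exact Module.Finite.of_surjective (0 : X (k + 1) →ₗ[A] ↥(LinearMap.range (d k).hom))
      (fun y => ⟨0, Subsingleton.elim _ _⟩)
  have hstep : ∀ k : ℤ, Module.Projective A ↥(LinearMap.range (d k).hom) →
      Module.Finite A ↥(LinearMap.range (d (k + 1)).hom) ∧
        Module.Projective A ↥(LinearMap.range (d (k + 1)).hom) := by
    intro k hp
    obtain ⟨s, π, hs, hπid, hπcoe⟩ := hπ k hp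
    constructor
    · haveI := (hfgp (k + 1)).1
      exact Module.Finite.of_surjective π (fun y => ⟨↑y, hπid y⟩)
    · haveI := (hfgp (k + 1)).2
      exact Module.Projective.of_split (LinearMap.range (d (k + 1)).hom).subtype π
        (LinearMap.ext hπid)
  have hFP : ∀ k : ℤ,
      Module.Finite A ↥(LinearMap.range (d k).hom) ∧ Module.Projective A ↥(LinearMap.range (d k).hom) := by
    have main : ∀ k : ℤ, -(N : ℤ) - 1 ≤ k →
        Module.Finite A ↥(LinearMap.range (d k).hom) ∧
          Module.Projective A ↥(LinearMap.range (d k).hom) := by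
      refine Int.le_induction ?_ ?_
      · exact hFPbase (-(N : ℤ) - 1) (by rw [abs_of_nonpos (by omega)]; omega)
      · intro m hm ih
        exact hstep m ih.2
    intro k
    rcases le_or_gt (-(N : ℤ) - 1) k with h | h
    · exact main k h
    · exact hFPbase k (by rw [abs_of_nonpos (by omega)]; omega)
  have hMfgp : ∀ k : ℤ, IsFGProj A (ModuleCat.of A ↥(LinearMap.range (d k).hom)) :=
    fun k => ⟨(hFP k).1, (hFP k).2⟩
  -- basic rank inequalities
  have hρcompid : ∀ ⦃P Q : ModuleCat.{0} A⦄ (f : P ⟶ Q),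
      IsFGProj A P → IsFGProj A Q → ρ f ≤ ρ (𝟙 Q) := by
    intro P Q f hP hQ
    have := (hideal f (𝟙 Q) hP hQ hQ).2
    rwa [Category.comp_id] at this
  have hsplitepi : ∀ ⦃P Q : ModuleCat.{0} A⦄ (e : P ⟶ Q) (s : Q ⟶ P), s ≫ e = 𝟙 Q →
      IsFGProj A P → IsFGProj A Q → ρ e = ρ (𝟙 Q) := by
    intro P Q e s hse hP hQ
    refine le_antisymm (hρcompid e hP hQ) ?_
    have := (hideal s e hQ hP hQ).2
    rwa [hse] at this
  have hρiso : ∀ ⦃P Q : ModuleCat.{0} A⦄ (u : P ⟶ Q) (v : Q ⟶ P), u ≫ v = 𝟙 P → v ≫ u = 𝟙 Q →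
      IsFGProj A P → IsFGProj A Q → ρ (𝟙 P) = ρ (𝟙 Q) := by
    intro P Q u v huv hvu hP hQ
    refine le_antisymm ?_ ?_
    · calc ρ (𝟙 P) = ρ (u ≫ v) := by rw [huv]
        _ ≤ ρ u := (hideal u v hP hQ hP).1
        _ ≤ ρ (𝟙 Q) := hρcompid u hP hQ
    · calc ρ (𝟙 Q) = ρ (v ≫ u) := by rw [hvu]
        _ ≤ ρ v := (hideal v u hQ hP hQ).1
        _ ≤ ρ (𝟙 P) := hρcompid v hQ hP
  -- rank of the differential equals rank of the identity of its image
  have hdrank : ∀ k : ℤ,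
      ρ (d (k + 1)) = ρ (𝟙 (ModuleCat.of A ↥(LinearMap.range (d (k + 1)).hom))) := by
    intro k
    obtain ⟨s₀, π₀, hs₀, hπ₀, _⟩ := hπ k (hFP k).2
    obtain ⟨s₁, _, hs₁, _, _⟩ := hπ (k + 1) (hFP (k + 1)).2
    have h1 : ρ (ModuleCat.ofHom ((d (k + 1)).hom.rangeRestrict)) =
        ρ (𝟙 (ModuleCat.of A ↥(LinearMap.range (d (k + 1)).hom))) := by
      refine hsplitepi (ModuleCat.ofHom ((d (k + 1)).hom.rangeRestrict))
        (ModuleCat.ofHom s₁) ?_ (hfgp _) (hMfgp (k + 1))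
      refine ModuleCat.hom_ext <| LinearMap.ext fun y => ?_
      exact hs₁ y
    have hfact : ModuleCat.ofHom ((d (k + 1)).hom.rangeRestrict) ≫
        ModuleCat.ofHom (LinearMap.range (d (k + 1)).hom).subtype = d (k + 1) := by
      refine ModuleCat.hom_ext <| LinearMap.ext fun x => ?_
      rfl
    have hfact2 : d (k + 1) ≫ ModuleCat.ofHom π₀ =
        ModuleCat.ofHom ((d (k + 1)).hom.rangeRestrict) := by
      refine ModuleCat.hom_ext <| LinearMap.ext fun x => ?_
      exact hπ₀ ((d (k + 1)).hom.rangeRestrict x)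
    rw [← h1]
    refine le_antisymm ?_ ?_
    · conv_lhs => rw [← hfact]
      exact (hideal _ _ (hfgp _) (hMfgp _) (hfgp _)).1
    · rw [← hfact2]
      exact (hideal _ _ (hfgp _) (hfgp _) (hMfgp _)).1
  -- the main computation
  intro n
  obtain ⟨m, rfl⟩ : ∃ m : ℤ, n = m + 1 := ⟨n - 1, by ring⟩
  obtain ⟨s, π, hs, hπid, hπcoe⟩ := hπ (m + 1) (hFP (m + 1)).2
  have hBfgp : IsFGProj A
      (ModuleCat.of A ↥(LinearMap.range (d (m + 1 + 1)).hom) ⊞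
        ModuleCat.of A ↥(LinearMap.range (d (m + 1)).hom)) := by
    haveI := (hFP (m + 1)).1; haveI := (hFP (m + 1)).2
    haveI := (hFP (m + 1 + 1)).1; haveI := (hFP (m + 1 + 1)).2
    have e : ↥(ModuleCat.of A ↥(LinearMap.range (d (m + 1 + 1)).hom) ⊞
        ModuleCat.of A ↥(LinearMap.range (d (m + 1)).hom)) ≃ₗ[A]
        (↥(LinearMap.range (d (m + 1 + 1)).hom) × ↥(LinearMap.range (d (m + 1)).hom)) :=
      (ModuleCat.biprodIsoProd (ModuleCat.of A ↥(LinearMap.range (d (m + 1 + 1)).hom))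
        (ModuleCat.of A ↥(LinearMap.range (d (m + 1)).hom))).toLinearEquiv
    exact ⟨Module.Finite.equiv e.symm, Module.Projective.of_equiv e.symm⟩
  have hu : (biprod.lift (ModuleCat.ofHom π)
      (ModuleCat.ofHom ((d (m + 1)).hom.rangeRestrict))) ≫
      (biprod.desc (ModuleCat.ofHom (LinearMap.range (d (m + 1 + 1)).hom).subtype)
        (ModuleCat.ofHom s)) = 𝟙 (X (m + 1 + 1)) := by
    rw [biprod.lift_desc]
    refine ModuleCat.hom_ext <| LinearMap.ext fun x => ?_
    show (π x : X (m + 1 + 1)) + s ((d (m + 1)).hom.rangeRestrict x) = x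
    rw [hπcoe x]
    abel
  have h00 : ModuleCat.ofHom (LinearMap.range (d (m + 1 + 1)).hom).subtype ≫
      ModuleCat.ofHom π = 𝟙 (ModuleCat.of A ↥(LinearMap.range (d (m + 1 + 1)).hom)) := by
    refine ModuleCat.hom_ext <| LinearMap.ext fun y => ?_
    exact hπid y
  have h01 : ModuleCat.ofHom (LinearMap.range (d (m + 1 + 1)).hom).subtype ≫
      ModuleCat.ofHom ((d (m + 1)).hom.rangeRestrict) = 0 := by
    refine ModuleCat.hom_ext <| LinearMap.ext fun y => ?_
    apply Subtype.ext
    exact hmem0 (m + 1) y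
  have h10 : ModuleCat.ofHom s ≫ ModuleCat.ofHom π = 0 := by
    refine ModuleCat.hom_ext <| LinearMap.ext fun y => ?_
    apply Subtype.ext
    show (π (s y) : X (m + 1 + 1)) = (0 : ↥(LinearMap.range (d (m + 1 + 1)).hom))
    rw [hπcoe (s y), hs y, sub_self]
    rfl
  have h11 : ModuleCat.ofHom s ≫ ModuleCat.ofHom ((d (m + 1)).hom.rangeRestrict) =
      𝟙 (ModuleCat.of A ↥(LinearMap.range (d (m + 1)).hom)) := by
    refine ModuleCat.hom_ext <| LinearMap.ext fun y => ?_
    exact hs y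
  have hv : (biprod.desc (ModuleCat.ofHom (LinearMap.range (d (m + 1 + 1)).hom).subtype)
      (ModuleCat.ofHom s)) ≫
      (biprod.lift (ModuleCat.ofHom π)
        (ModuleCat.ofHom ((d (m + 1)).hom.rangeRestrict))) =
      𝟙 (ModuleCat.of A ↥(LinearMap.range (d (m + 1 + 1)).hom) ⊞
        ModuleCat.of A ↥(LinearMap.range (d (m + 1)).hom)) := by
    apply biprod.hom_ext'
    · apply biprod.hom_ext <;> simp [h00, h01]
    · apply biprod.hom_ext <;> simp [h10, h11]
  have hmap : biprod.map (𝟙 (ModuleCat.of A ↥(LinearMap.range (d (m + 1 + 1)).hom)))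
      (𝟙 (ModuleCat.of A ↥(LinearMap.range (d (m + 1)).hom))) =
      𝟙 (ModuleCat.of A ↥(LinearMap.range (d (m + 1 + 1)).hom) ⊞
        ModuleCat.of A ↥(LinearMap.range (d (m + 1)).hom)) := by
    apply biprod.hom_ext <;> simp
  calc ρ (𝟙 (X (m + 1 + 1)))
      = ρ (𝟙 (ModuleCat.of A ↥(LinearMap.range (d (m + 1 + 1)).hom) ⊞
          ModuleCat.of A ↥(LinearMap.range (d (m + 1)).hom))) := hρiso _ _ hu hv (hfgp _) hBfgp
    _ = ρ (𝟙 (ModuleCat.of A ↥(LinearMap.range (d (m + 1 + 1)).hom))) +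
          ρ (𝟙 (ModuleCat.of A ↥(LinearMap.range (d (m + 1)).hom))) := by
        rw [← hmap]
        exact hadd _ _ (hMfgp _) (hMfgp _) (hMfgp _) (hMfgp _)
    _ = ρ (d (m + 1)) + ρ (d (m + 1 + 1)) := by
        rw [hdrank m, hdrank (m + 1)]
        ring
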